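/- arXiv:1702.01492 — 3 statements merged into one kernel-verified Lean document; each statement's English description precedes it below -/
import Mathlib

section
/- A weighted digraph is weight-balanced (every node's weighted in-degree equals its weighted out-degree) if and only if L + Lᵀ is positive semidefinite, where L is the in-degree Laplacian. -/
open Matrix

/-- A weighted digraph (adjacency matrix `A` with nonnegative weights and zero
diagonal) is weight-balanced iff `L + Lᵀ` is positive semidefinite, where
`L = D_in - A` is the in-degree Laplacian. -/
theorem weight_balanced_iff_laplacian_psd
    (N : ℕ) (A : Matrix (Fin N) (Fin N) ℝ)
    (hA : ∀ i j, 0 ≤ A i j) (hdiag : ∀ i, A i i = 0)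
    (L : Matrix (Fin N) (Fin N) ℝ)
    (hL : L = Matrix.diagonal (fun i => ∑ j, A i j) - A) :
    (∀ i, ∑ j, A i j = ∑ j, A j i) ↔ (L + Lᵀ).PosSemidef := by
  subst hL
  set r : Fin N → ℝ := fun i => ∑ j, A i j with hr
  have hherm : (Matrix.diagonal r - A + (Matrix.diagonal r - A)ᵀ).IsHermitian := by
    unfold Matrix.IsHermitian
    rw [conjTranspose_eq_transpose_of_trivial]
    rw [transpose_add, transpose_transpose]
    exact add_comm _ _
  have expand : ∀ x : Fin N → ℝ,
      x ⬝ᵥ ((Matrix.diagonal r - A + (Matrix.diagonal r - A)ᵀ) *ᵥ x)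
        = 2 * (∑ i, r i * x i ^ 2) - 2 * ∑ i, ∑ j, A i j * (x i * x j) := by
    intro x
    have hs : ∑ i, ∑ j, A j i * (x i * x j) = ∑ i, ∑ j, A i j * (x i * x j) := by
      rw [Finset.sum_comm]
      apply Finset.sum_congr rfl; intro i _
      apply Finset.sum_congr rfl; intro j _
      ring
    simp only [dotProduct, mulVec, Matrix.add_apply, Matrix.sub_apply,
      Matrix.transpose_apply, Matrix.diagonal_apply]
    have : ∀ i, (∑ j, ((if i = j then r i else 0) - A i j +
        ((if j = i then r j else 0) - A j i)) * x j)
        = 2 * (r i * x i) - (∑ j, A i j * x j) - (∑ j, A j i * x j) := by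
      intro i
      rw [Finset.sum_congr rfl (fun j _ => by split_ifs <;> ring :
        ∀ j ∈ Finset.univ, ((if i = j then r i else 0) - A i j +
          ((if j = i then r j else 0) - A j i)) * x j =
          ((if i = j then r i * x j else 0) + (if j = i then r j * x j else 0))
            - (A i j * x j + A j i * x j))]
      rw [Finset.sum_sub_distrib, Finset.sum_add_distrib, Finset.sum_ite_eq,
        Finset.sum_ite_eq']
      simp only [Finset.mem_univ, if_true]
      rw [Finset.sum_add_distrib]
      ring
    rw [Finset.sum_congr rfl (fun i _ => by rw [this i])]
    rw [Finset.sum_congr rfl (fun i _ => by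
        rw [mul_sub, mul_sub, Finset.mul_sum, Finset.mul_sum,
          Finset.sum_congr rfl (fun j _ => by ring :
            ∀ j ∈ Finset.univ, x i * (A i j * x j) = A i j * (x i * x j)),
          Finset.sum_congr rfl (fun j _ => by ring :
            ∀ j ∈ Finset.univ, x i * (A j i * x j) = A j i * (x i * x j))]
        ring :
      ∀ i ∈ Finset.univ, x i * (2 * (r i * x i) - (∑ j, A i j * x j) - (∑ j, A j i * x j))
        = 2 * (r i * x i ^ 2) - (∑ j, A i j * (x i * x j)) - (∑ j, A j i * (x i * x j)))]
    rw [Finset.sum_sub_distrib, Finset.sum_sub_distrib, hs, ← Finset.mul_sum]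
    ring
  constructor
  · intro hbal
    refine Matrix.posSemidef_iff_dotProduct_mulVec.mpr ⟨hherm, fun x => ?_⟩
    have hstar : star x = x := rfl
    rw [hstar, expand x]
    have key : 2 * (∑ i, r i * x i ^ 2) - 2 * ∑ i, ∑ j, A i j * (x i * x j)
        = ∑ i, ∑ j, A i j * (x i - x j) ^ 2 := by
      have h1 : ∑ i, ∑ j, A i j * (x i - x j) ^ 2
          = (∑ i, ∑ j, A i j * x i ^ 2) + (∑ i, ∑ j, A i j * x j ^ 2)
            - 2 * ∑ i, ∑ j, A i j * (x i * x j) := by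
        rw [Finset.mul_sum, ← Finset.sum_add_distrib, ← Finset.sum_sub_distrib]
        apply Finset.sum_congr rfl; intro i _
        rw [Finset.mul_sum, ← Finset.sum_add_distrib, ← Finset.sum_sub_distrib]
        apply Finset.sum_congr rfl; intro j _
        ring
      have h2 : ∑ i, ∑ j, A i j * x i ^ 2 = ∑ i, r i * x i ^ 2 := by
        apply Finset.sum_congr rfl; intro i _
        rw [show r i = ∑ j, A i j from rfl, Finset.sum_mul]
      have h3 : ∑ i, ∑ j, A i j * x j ^ 2 = ∑ i, r i * x i ^ 2 := by
        rw [Finset.sum_comm]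
        apply Finset.sum_congr rfl; intro i _
        rw [show r i = ∑ j, A j i from hbal i, Finset.sum_mul]
      rw [h1, h2, h3]; ring
    rw [key]
    apply Finset.sum_nonneg; intro i _
    apply Finset.sum_nonneg; intro j _
    exact mul_nonneg (hA i j) (sq_nonneg _)
  · intro hpsd
    have h1 : (1 : Fin N → ℝ) ⬝ᵥ ((Matrix.diagonal r - A + (Matrix.diagonal r - A)ᵀ) *ᵥ 1) = 0 := by
      rw [expand 1]
      simp only [Pi.one_apply, one_pow, mul_one]
      rw [hr]
      ring
    have hmv : (Matrix.diagonal r - A + (Matrix.diagonal r - A)ᵀ) *ᵥ (1 : Fin N → ℝ) = 0 := by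
      have := (hpsd.dotProduct_mulVec_zero_iff (1 : Fin N → ℝ)).mp ?_
      · exact this
      · have hstar : star (1 : Fin N → ℝ) = 1 := rfl
        rw [hstar, h1]
    intro i
    have := congrFun hmv i
    simp only [mulVec, dotProduct, Matrix.add_apply, Matrix.sub_apply, Matrix.transpose_apply,
      Matrix.diagonal_apply, Pi.one_apply, mul_one, Pi.zero_apply] at this
    rw [Finset.sum_add_distrib, Finset.sum_sub_distrib, Finset.sum_sub_distrib,
      Finset.sum_ite_eq, Finset.sum_ite_eq'] at this
    simp only [Finset.mem_univ, if_true] at this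
    rw [hr] at this
    linarith [this]
end

section
/- Let H be symmetric with H ⪰ c₀I (c₀ > 0) and L with L + Lᵀ positive semidefinite, ε > 0. Then every eigenvalue η of (H + ε⁻¹HLH)⁻¹ satisfies |η| ≤ c₀⁻¹, i.e., the spectral radius of (H + ε⁻¹HLH)⁻¹ is at most c₀⁻¹. -/
open Matrix
open scoped ComplexOrder

lemma psd_map_ofReal' {m : ℕ} {S : Matrix (Fin m) (Fin m) ℝ} (hS : S.PosSemidef) :
    (S.map (Complex.ofReal)).PosSemidef := by
  open scoped MatrixOrder in
  obtain ⟨B, rfl⟩ : ∃ B : Matrix (Fin m) (Fin m) ℝ, S = Bᴴ * B :=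
    CStarAlgebra.nonneg_iff_eq_star_mul_self.mp hS.nonneg
  have h1 : (Bᴴ * B).map Complex.ofReal
      = ((B.map Complex.ofReal))ᴴ * (B.map Complex.ofReal) := by
    ext i j
    simp [Matrix.mul_apply, Matrix.map_apply, Matrix.conjTranspose_apply]
  rw [h1]
  exact Matrix.posSemidef_conjTranspose_mul_self _

lemma dot_self_re_pos' {m : ℕ} {v : Fin m → ℂ} (hv : v ≠ 0) : 0 < (star v ⬝ᵥ v).re := by
  obtain ⟨i, hi⟩ := Function.ne_iff.mp hv
  have h1 : (star v ⬝ᵥ v).re = ∑ j, Complex.normSq (v j) := by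
    rw [dotProduct, Complex.re_sum]
    refine Finset.sum_congr rfl fun j _ => ?_
    simp [Complex.mul_re, Complex.normSq_apply]
  rw [h1]
  refine Finset.sum_pos' (fun j _ => Complex.normSq_nonneg _) ⟨i, Finset.mem_univ i, ?_⟩
  simpa [Complex.normSq_pos] using hi

lemma dot_self_im_zero' {m : ℕ} (v : Fin m → ℂ) : (star v ⬝ᵥ v).im = 0 := by
  rw [dotProduct, Complex.im_sum]
  refine Finset.sum_eq_zero fun j _ => ?_
  simp [Complex.mul_im]
  ring

lemma key_quadratic' {m : ℕ} {H L : Matrix (Fin m) (Fin m) ℝ} {c₀ ε : ℝ}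
    (hHsymm : H.IsSymm)
    (hHc : (H - c₀ • (1 : Matrix (Fin m) (Fin m) ℝ)).PosSemidef)
    (hL : (L + Lᵀ).PosSemidef) (hε : 0 < ε) (v : Fin m → ℂ) :
    c₀ * (star v ⬝ᵥ v).re
      ≤ (star v ⬝ᵥ ((H + ε⁻¹ • (H * L * H)).map Complex.ofReal) *ᵥ v).re := by
  set Hc := H.map Complex.ofReal with hHcdef
  set Lc := L.map Complex.ofReal with hLcdef
  have hmap : (H + ε⁻¹ • (H * L * H)).map Complex.ofReal
      = Hc + ((ε⁻¹ : ℝ) : ℂ) • (Hc * Lc * Hc) := by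
    ext i j
    simp only [hHcdef, hLcdef, Matrix.map_apply, Matrix.add_apply, Matrix.smul_apply,
      Matrix.mul_apply, smul_eq_mul]
    push_cast
    ring
  have hHcherm : Hc.IsHermitian := by
    ext i j
    have := congrFun (congrFun hHsymm j) i
    simp only [Matrix.transpose_apply] at this
    simp [hHcdef, Matrix.conjTranspose_apply, Matrix.map_apply, this]
  have h1 : c₀ * (star v ⬝ᵥ v).re ≤ (star v ⬝ᵥ Hc *ᵥ v).re := by
    have hpsd := psd_map_ofReal' hHc
    have hmap2 : (H - c₀ • (1 : Matrix (Fin m) (Fin m) ℝ)).map Complex.ofReal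
        = Hc - (c₀ : ℂ) • 1 := by
      ext i j
      by_cases h : i = j <;>
        simp [hHcdef, Matrix.map_apply, Matrix.sub_apply, Matrix.smul_apply,
          Matrix.one_apply, h]
    rw [hmap2] at hpsd
    have h := hpsd.re_dotProduct_nonneg v
    rw [sub_mulVec, dotProduct_sub, smul_mulVec, one_mulVec, dotProduct_smul] at h
    simp only [RCLike.re_to_complex, smul_eq_mul, Complex.sub_re, Complex.mul_re,
      Complex.ofReal_re, Complex.ofReal_im, zero_mul, sub_zero] at h
    linarith
  have h2 : 0 ≤ (star v ⬝ᵥ (Hc * Lc * Hc) *ᵥ v).re := by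
    set w := Hc *ᵥ v with hw
    have hrw : star v ⬝ᵥ (Hc * Lc * Hc) *ᵥ v = star w ⬝ᵥ Lc *ᵥ w := by
      calc star v ⬝ᵥ (Hc * Lc * Hc) *ᵥ v
          = star v ⬝ᵥ Hc *ᵥ (Lc *ᵥ (Hc *ᵥ v)) := by rw [mulVec_mulVec, mulVec_mulVec]
        _ = (star v ᵥ* Hc) ⬝ᵥ (Lc *ᵥ w) := by rw [dotProduct_mulVec]
        _ = star w ⬝ᵥ Lc *ᵥ w := by rw [hw, star_mulVec, hHcherm.eq]
    have hpsdL := psd_map_ofReal' hL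
    have hLmap : (L + Lᵀ).map Complex.ofReal = Lc + Lcᴴ := by
      ext i j
      simp [hLcdef, Matrix.map_apply, Matrix.add_apply, Matrix.conjTranspose_apply,
        Matrix.transpose_apply]
    rw [hLmap] at hpsdL
    have hnn := hpsdL.re_dotProduct_nonneg w
    have hconj : star w ⬝ᵥ Lcᴴ *ᵥ w = star (star w ⬝ᵥ Lc *ᵥ w) := by
      rw [star_dotProduct, star_mulVec, conjTranspose_conjTranspose, ← dotProduct_mulVec]
    rw [add_mulVec, dotProduct_add, hconj] at hnn
    simp only [RCLike.re_to_complex, Complex.add_re, RCLike.star_def, Complex.conj_re] at hnn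
    rw [hrw]
    linarith
  rw [hmap, add_mulVec, dotProduct_add, smul_mulVec, dotProduct_smul]
  simp only [smul_eq_mul, Complex.add_re, Complex.mul_re, Complex.ofReal_re,
    Complex.ofReal_im, zero_mul, sub_zero]
  have hε' : 0 ≤ ε⁻¹ := le_of_lt (inv_pos.mpr hε)
  nlinarith [mul_nonneg hε' h2]


/-- With `H` symmetric, `H ⪰ c₀ I` (`c₀ > 0`), `L + Lᵀ ⪰ 0` and `ε > 0`,
every eigenvalue `η` of `(H + ε⁻¹ H L H)⁻¹` satisfies `|η| ≤ c₀⁻¹`, i.e. the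
spectral radius of `(H + ε⁻¹ H L H)⁻¹` is at most `c₀⁻¹`. -/
theorem spectral_radius_bound_inverse
    (m : ℕ) (H L : Matrix (Fin m) (Fin m) ℝ) (c₀ : ℝ) (hc₀ : 0 < c₀)
    (hHsymm : H.IsSymm)
    (hHc : (H - c₀ • (1 : Matrix (Fin m) (Fin m) ℝ)).PosSemidef)
    (hL : (L + Lᵀ).PosSemidef) (ε : ℝ) (hε : 0 < ε) :
    ∀ η ∈ spectrum ℂ (((H + ε⁻¹ • (H * L * H))⁻¹).map (Complex.ofReal)),
      ‖η‖ ≤ c₀⁻¹ := by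
  intro η hη
  set M : Matrix (Fin m) (Fin m) ℝ := H + ε⁻¹ • (H * L * H) with hMdef
  have key := key_quadratic' (c₀ := c₀) (ε := ε) hHsymm hHc hL hε
  -- M is nonsingular
  have hdet : IsUnit M.det := by
    rw [isUnit_iff_ne_zero]
    intro h0
    have hdetC : (M.map Complex.ofReal).det = 0 := by
      have h := Complex.ofRealHom.map_det M
      rw [RingHom.mapMatrix_apply] at h
      have hcast : M.map Complex.ofReal = M.map ⇑Complex.ofRealHom := rfl
      rw [hcast, ← h, h0, map_zero]
    obtain ⟨v, hv, hveq⟩ := Matrix.exists_mulVec_eq_zero_iff.mpr hdetC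
    have hk := key v
    rw [hveq] at hk
    simp only [dotProduct_zero, Complex.zero_re] at hk
    have hpos := dot_self_re_pos' hv
    nlinarith
  -- extract eigenvector
  rw [spectrum.mem_iff, Matrix.isUnit_iff_isUnit_det, isUnit_iff_ne_zero, not_not] at hη
  obtain ⟨v, hv, hveq⟩ := Matrix.exists_mulVec_eq_zero_iff.mpr hη
  rw [sub_mulVec, Algebra.algebraMap_eq_smul_one, smul_mulVec, one_mulVec,
    sub_eq_zero] at hveq
  -- hveq : η • v = (M⁻¹).map Complex.ofReal *ᵥ v
  have hAB : (M.map Complex.ofReal) * ((M⁻¹).map Complex.ofReal) = 1 := by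
    have hMr : M * M⁻¹ = 1 := Matrix.mul_nonsing_inv M hdet
    have hcast : ∀ N : Matrix (Fin m) (Fin m) ℝ,
        N.map Complex.ofReal = N.map ⇑Complex.ofRealHom := fun _ => rfl
    rw [hcast, hcast, ← Matrix.map_mul, hMr]
    exact Matrix.map_one _ (map_zero _) (map_one _)
  have hvw : v = η • ((M.map Complex.ofReal) *ᵥ v) := by
    calc v = ((M.map Complex.ofReal) * ((M⁻¹).map Complex.ofReal)) *ᵥ v := by
            rw [hAB, one_mulVec]
      _ = (M.map Complex.ofReal) *ᵥ (((M⁻¹).map Complex.ofReal) *ᵥ v) := by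
            rw [mulVec_mulVec]
      _ = (M.map Complex.ofReal) *ᵥ (η • v) := by rw [← hveq]
      _ = η • ((M.map Complex.ofReal) *ᵥ v) := mulVec_smul _ _ _
  set z : ℂ := star v ⬝ᵥ (M.map Complex.ofReal) *ᵥ v with hzdef
  have hSz : star v ⬝ᵥ v = η * z := by
    have h := congrArg (fun x => star v ⬝ᵥ x) hvw
    simpa only [dotProduct_smul, smul_eq_mul] using h
  set S : ℝ := (star v ⬝ᵥ v).re with hSdef
  have hSpos : 0 < S := dot_self_re_pos' hv
  have hkey : c₀ * S ≤ z.re := key v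
  have hreal : (star v ⬝ᵥ v) = (S : ℂ) := by
    apply Complex.ext
    · simp [hSdef]
    · simp [dot_self_im_zero' v]
  have hnorm : ‖η‖ * ‖z‖ = S := by
    have h1 : ‖(S : ℂ)‖ = S := by
      rw [Complex.norm_real, Real.norm_eq_abs]; exact abs_of_pos hSpos
    calc ‖η‖ * ‖z‖ = ‖η * z‖ := (norm_mul η z).symm
      _ = ‖star v ⬝ᵥ v‖ := by rw [← hSz]
      _ = S := by rw [hreal]; exact h1
  have hzre : z.re ≤ ‖z‖ := by
    exact Complex.re_le_norm z
  have hznn : c₀ * S ≤ ‖z‖ := le_trans hkey hzre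
  have hηnn : 0 ≤ ‖η‖ := norm_nonneg η
  rw [inv_eq_one_div, le_div_iff₀ hc₀]
  nlinarith [mul_le_mul_of_nonneg_left hznn hηnn]
end

section
/- Suppose f : ℝ^{nN} → ℝ is strongly convex and differentiable, L ∈ ℝ^{N×N} satisfies L + Lᵀ positive semidefinite, and ε > 0. If (x, λ) and (x', λ') both satisfy 0 = ∇f(x) + λ and 0 = -ε(x - b) + (L ⊗ I_n)λ, then x = x' and λ = λ'. (Uniqueness of the algorithm equilibrium.) -/
open Matrix

section aux

variable {E : Type*} [NormedAddCommGroup E] [InnerProductSpace ℝ E] [CompleteSpace E]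

/-- Subgradient inequality for strongly convex differentiable functions. -/
lemma subgrad_aux (f : E → ℝ) (c₀ : ℝ)
    (hconv : ∀ z₁ z₂ : E, ∀ t : ℝ, t ∈ Set.Ioo (0:ℝ) 1 →
      f (t • z₁ + (1 - t) • z₂) ≤ t * f z₁ + (1 - t) * f z₂
        - c₀ / 2 * (t * (1 - t)) * ‖z₁ - z₂‖ ^ 2)
    (g : E → E) (hg : ∀ x, HasGradientAt f (g x) x) (z₁ z₂ : E) :
    (inner ℝ (g z₂) (z₁ - z₂) : ℝ) ≤ f z₁ - f z₂ - c₀ / 2 * ‖z₁ - z₂‖ ^ 2 := by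
  set v := z₁ - z₂ with hv
  set φ : ℝ → ℝ := fun t => f (z₂ + t • v) with hφdef
  have hline : HasDerivAt (fun t : ℝ => z₂ + t • v) v 0 := by
    simpa using ((hasDerivAt_id (0:ℝ)).smul_const v).const_add z₂
  have hF : HasFDerivAt f (InnerProductSpace.toDual ℝ E (g z₂)) z₂ := (hg z₂).hasFDerivAt
  have h0 : z₂ + (0:ℝ) • v = z₂ := by simp
  rw [← h0] at hF
  have hφ : HasDerivAt φ (inner ℝ (g z₂) v : ℝ) 0 := by
    have := hF.comp_hasDerivAt 0 hline
    simp [hφdef, Function.comp] at this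
    exact this
  have hslope : Filter.Tendsto (slope φ 0) (nhdsWithin 0 (Set.Ioi 0))
      (nhds (inner ℝ (g z₂) v : ℝ)) :=
    (hasDerivAt_iff_tendsto_slope.mp hφ).mono_left
      (nhdsWithin_mono 0 (fun t ht => Set.mem_compl_singleton_iff.mpr (ne_of_gt ht)))
  have hR : Filter.Tendsto (fun t : ℝ => f z₁ - f z₂ - c₀ / 2 * (1 - t) * ‖v‖ ^ 2)
      (nhdsWithin 0 (Set.Ioi 0)) (nhds (f z₁ - f z₂ - c₀ / 2 * ‖v‖ ^ 2)) := by
    have hc : Continuous (fun t : ℝ => f z₁ - f z₂ - c₀ / 2 * (1 - t) * ‖v‖ ^ 2) := by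
      fun_prop
    have h2 : Filter.Tendsto (fun t : ℝ => f z₁ - f z₂ - c₀ / 2 * (1 - t) * ‖v‖ ^ 2)
        (nhdsWithin 0 (Set.Ioi 0)) (nhds (f z₁ - f z₂ - c₀ / 2 * (1 - 0) * ‖v‖ ^ 2)) :=
      (hc.tendsto 0).mono_left nhdsWithin_le_nhds
    simpa using h2
  have hev : ∀ᶠ t in nhdsWithin 0 (Set.Ioi 0),
      slope φ 0 t ≤ f z₁ - f z₂ - c₀ / 2 * (1 - t) * ‖v‖ ^ 2 := by
    filter_upwards [Ioo_mem_nhdsGT_of_mem (by constructor <;> norm_num :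
      (0:ℝ) ∈ Set.Ico (0:ℝ) 1)] with t ht
    have h := hconv z₁ z₂ t ht
    have ht0 : (0:ℝ) < t := ht.1
    have key : z₂ + t • v = t • z₁ + (1 - t) • z₂ := by
      rw [hv]; rw [smul_sub, sub_smul, one_smul]; abel
    have hφt : φ t = f (t • z₁ + (1 - t) • z₂) := by
      show f (z₂ + t • v) = _
      rw [key]
    have hφ0 : φ 0 = f z₂ := by simp [hφdef]
    have hsl : slope φ 0 t = (φ t - φ 0) / t := by
      simp [slope, sub_zero, div_eq_inv_mul]
    rw [hsl, div_le_iff₀ ht0]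
    have hr : (f z₁ - f z₂ - c₀ / 2 * (1 - t) * ‖v‖ ^ 2) * t
        = t * f z₁ + (1 - t) * f z₂ - c₀ / 2 * (t * (1 - t)) * ‖v‖ ^ 2 - f z₂ := by
      ring
    rw [hr, hφt, hφ0]
    linarith
  exact le_of_tendsto_of_tendsto hslope hR hev

/-- Strong monotonicity of the gradient. -/
lemma grad_mono_aux (f : E → ℝ) (c₀ : ℝ)
    (hconv : ∀ z₁ z₂ : E, ∀ t : ℝ, t ∈ Set.Ioo (0:ℝ) 1 →
      f (t • z₁ + (1 - t) • z₂) ≤ t * f z₁ + (1 - t) * f z₂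
        - c₀ / 2 * (t * (1 - t)) * ‖z₁ - z₂‖ ^ 2)
    (g : E → E) (hg : ∀ x, HasGradientAt f (g x) x) (z₁ z₂ : E) :
    c₀ * ‖z₁ - z₂‖ ^ 2 ≤ (inner ℝ (g z₁ - g z₂) (z₁ - z₂) : ℝ) := by
  have h1 := subgrad_aux f c₀ hconv g hg z₁ z₂
  have h2 := subgrad_aux f c₀ hconv g hg z₂ z₁
  have hnorm : ‖z₂ - z₁‖ = ‖z₁ - z₂‖ := norm_sub_rev _ _
  rw [hnorm] at h2
  have e : (inner ℝ (g z₁) (z₂ - z₁) : ℝ) = - inner ℝ (g z₁) (z₁ - z₂) := by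
    rw [← inner_neg_right, neg_sub]
  rw [e] at h2
  rw [inner_sub_left]
  linarith

/-- Nonnegativity of the quadratic form from `L + Lᵀ ⪰ 0`. -/
lemma quad_nonneg_aux {N : ℕ} (L : Matrix (Fin N) (Fin N) ℝ)
    (hL : (L + Lᵀ).PosSemidef) (v : Fin N → ℝ) :
    0 ≤ ∑ i, ∑ j, v i * (L i j * v j) := by
  have h := hL.dotProduct_mulVec_nonneg v
  have hcomm : ∑ i, ∑ j, v i * (L j i * v j) = ∑ i, ∑ j, v i * (L i j * v j) := by
    rw [Finset.sum_comm]
    apply Finset.sum_congr rfl; intro i _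
    apply Finset.sum_congr rfl; intro j _; ring
  have hrw : dotProduct (star v) ((L + Lᵀ) *ᵥ v)
      = (∑ i, ∑ j, v i * (L i j * v j)) + ∑ i, ∑ j, v i * (L j i * v j) := by
    simp only [star_trivial, dotProduct, Matrix.mulVec, Matrix.add_apply,
      Matrix.transpose_apply, mul_add, add_mul, Finset.mul_sum,
      Finset.sum_add_distrib]
  rw [hrw, hcomm] at h
  linarith

end aux

/-- Uniqueness of the algorithm equilibrium: if `f` is strongly convex
differentiable (gradient `g`), `L + Lᵀ ⪰ 0`, `ε > 0`, and both `(x, λ)` and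
`(x', λ')` satisfy `0 = ∇f(x) + λ`, `0 = -ε(x - b) + (L ⊗ I_n)λ`, then
`x = x'` and `λ = λ'`. -/
theorem equilibrium_unique
    (n N : ℕ) (f : EuclideanSpace ℝ (Fin N × Fin n) → ℝ) (c₀ : ℝ) (hc₀ : 0 < c₀)
    (hconv : ∀ z₁ z₂ : EuclideanSpace ℝ (Fin N × Fin n), ∀ t : ℝ, t ∈ Set.Ioo (0:ℝ) 1 →
      f (t • z₁ + (1 - t) • z₂) ≤ t * f z₁ + (1 - t) * f z₂
        - c₀ / 2 * (t * (1 - t)) * ‖z₁ - z₂‖ ^ 2)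
    (g : EuclideanSpace ℝ (Fin N × Fin n) → EuclideanSpace ℝ (Fin N × Fin n))
    (hg : ∀ x, HasGradientAt f (g x) x)
    (L : Matrix (Fin N) (Fin N) ℝ) (hL : (L + Lᵀ).PosSemidef)
    (ε : ℝ) (hε : 0 < ε) (b : EuclideanSpace ℝ (Fin N × Fin n))
    (x lam x' lam' : EuclideanSpace ℝ (Fin N × Fin n))
    (heq1 : ∀ p : Fin N × Fin n, 0 = g x p + lam p)
    (heq2 : ∀ p : Fin N × Fin n,
      0 = -ε * (x p - b p) + ∑ j, L p.1 j * lam (j, p.2))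
    (heq1' : ∀ p : Fin N × Fin n, 0 = g x' p + lam' p)
    (heq2' : ∀ p : Fin N × Fin n,
      0 = -ε * (x' p - b p) + ∑ j, L p.1 j * lam' (j, p.2)) :
    x = x' ∧ lam = lam' := by
  -- difference of λ-components of the equilibrium equations
  have hsum : ∀ p : Fin N × Fin n,
      ε * (x p - x' p) = ∑ j, L p.1 j * (lam (j, p.2) - lam' (j, p.2)) := by
    intro p
    have h := heq2 p
    have h' := heq2' p
    have hsplit : ∑ j, L p.1 j * (lam (j, p.2) - lam' (j, p.2))
        = (∑ j, L p.1 j * lam (j, p.2)) - ∑ j, L p.1 j * lam' (j, p.2) := by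
      rw [← Finset.sum_sub_distrib]
      apply Finset.sum_congr rfl; intro j _; ring
    rw [hsplit]
    linarith
  -- the quadratic form is nonnegative
  have hQ : 0 ≤ ∑ p : Fin N × Fin n, (lam p - lam' p) * (ε * (x p - x' p)) := by
    have : ∑ p : Fin N × Fin n, (lam p - lam' p) * (ε * (x p - x' p))
        = ∑ s : Fin n, ∑ i : Fin N, ∑ j : Fin N,
            (lam (i, s) - lam' (i, s)) * (L i j * (lam (j, s) - lam' (j, s))) := by
      rw [Fintype.sum_prod_type, Finset.sum_comm]
      apply Finset.sum_congr rfl; intro s _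
      apply Finset.sum_congr rfl; intro i _
      rw [hsum (i, s), Finset.mul_sum]
    rw [this]
    apply Finset.sum_nonneg
    intro s _
    exact quad_nonneg_aux L hL (fun i => lam (i, s) - lam' (i, s))
  -- relate λ-difference to gradient difference
  have hglam : ∀ p, g x p - g x' p = -(lam p - lam' p) := by
    intro p
    have := heq1 p
    have := heq1' p
    linarith
  -- gradient strong monotonicity
  have hmono := grad_mono_aux f c₀ hconv g hg x x'
  have hinner : (inner ℝ (g x - g x') (x - x') : ℝ)
      = - ∑ p : Fin N × Fin n, (lam p - lam' p) * (x p - x' p) := by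
    rw [PiLp.inner_apply]
    rw [← Finset.sum_neg_distrib]
    apply Finset.sum_congr rfl
    intro p _
    have h1 : (g x - g x') p = g x p - g x' p := rfl
    have h2 : (x - x') p = x p - x' p := rfl
    simp only [RCLike.inner_apply, conj_trivial, h1, h2, hglam p]
    ring
  have hQ' : 0 ≤ ∑ p : Fin N × Fin n, (lam p - lam' p) * (x p - x' p) := by
    have hfac : ∑ p : Fin N × Fin n, (lam p - lam' p) * (ε * (x p - x' p))
        = ε * ∑ p : Fin N × Fin n, (lam p - lam' p) * (x p - x' p) := by
      rw [Finset.mul_sum]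
      apply Finset.sum_congr rfl; intro p _; ring
    rw [hfac] at hQ
    exact nonneg_of_mul_nonneg_right hQ hε
  have hxx' : x = x' := by
    have hle : c₀ * ‖x - x'‖ ^ 2 ≤ 0 := by
      rw [hinner] at hmono
      linarith
    have : ‖x - x'‖ ^ 2 ≤ 0 := by
      by_contra hcon
      push_neg at hcon
      nlinarith
    have hz : ‖x - x'‖ = 0 := by
      have := sq_nonneg ‖x - x'‖
      nlinarith
    have : x - x' = 0 := norm_eq_zero.mp hz
    exact sub_eq_zero.mp this
  refine ⟨hxx', ?_⟩
  ext p
  have h1 := heq1 p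
  have h2 := heq1' p
  rw [hxx'] at h1
  linarith
end
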